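/- Let d > 0 and a ≥ 0 be real numbers, and let u, ℓ : ℕ → ℝ be sequences of nonnegative real numbers such that u(0) ≤ 1, u(1) ≤ a/d, ℓ(j) ≤ a·u(j−1) for all j ≥ 1, and u(k) ≤ (1/d)·( Σ_{j=1}^{k} u(k−j)·ℓ(j) + a·u(k−1) ) for all k ≥ 2. Then u(k) ≤ c(k)·(a/d)^k for all k ∈ ℕ. -/

import Mathlib

/-- The coefficient sequence `c` with `c 0 = c 1 = 1` and
`c k = c (k-1) + ∑_{i=0}^{k-1} c i * c (k-1-i)` for `k ≥ 2`. -/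
def c : ℕ → ℕ
  | 0 => 1
  | 1 => 1
  | k + 2 =>
      c (k + 1) + ∑ i ∈ (Finset.range (k + 2)).attach, c i.1 * c (k + 1 - i.1)
decreasing_by
  all_goals first
    | omega
    | (have := Finset.mem_range.mp i.2; omega)

lemma c_rec (m : ℕ) :
    c (m + 2) = c (m + 1) + ∑ i ∈ Finset.range (m + 2), c i * c (m + 1 - i) := by
  rw [c]
  congr 1
  exact Finset.sum_attach (Finset.range (m + 2)) (fun i => c i * c (m + 1 - i))

theorem stmt0 (d a : ℝ) (hd : 0 < d) (ha : 0 ≤ a) (u ℓ : ℕ → ℝ)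
    (hu : ∀ k, 0 ≤ u k) (hℓ : ∀ j, 0 ≤ ℓ j)
    (hu0 : u 0 ≤ 1) (hu1 : u 1 ≤ a / d)
    (hℓu : ∀ j, 1 ≤ j → ℓ j ≤ a * u (j - 1))
    (hrec : ∀ k, 2 ≤ k →
      u k ≤ (1 / d) * ((∑ j ∈ Finset.Icc 1 k, u (k - j) * ℓ j) + a * u (k - 1))) :
    ∀ k, u k ≤ (c k : ℝ) * (a / d) ^ k := by
  have had : 0 ≤ a / d := div_nonneg ha hd.le
  intro k
  induction k using Nat.strong_induction_on with
  | _ k ih =>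
    match k with
    | 0 => simpa [c] using hu0
    | 1 => simpa [c] using hu1
    | (m + 2) =>
      have h1 := hrec (m + 2) (by omega)
      have hsum : (∑ j ∈ Finset.Icc 1 (m + 2), u (m + 2 - j) * ℓ j)
          ≤ ∑ j ∈ Finset.Icc 1 (m + 2),
              ((c (m + 2 - j) : ℝ) * (c (j - 1) : ℝ)) * (a * (a / d) ^ (m + 1)) := by
        apply Finset.sum_le_sum
        intro j hj
        obtain ⟨hj1, hj2⟩ := Finset.mem_Icc.mp hj
        have h3 : u (j - 1) ≤ (c (j - 1) : ℝ) * (a / d) ^ (j - 1) := ih (j - 1) (by omega)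
        have h4 : u (m + 2 - j) ≤ (c (m + 2 - j) : ℝ) * (a / d) ^ (m + 2 - j) :=
          ih (m + 2 - j) (by omega)
        have h2 : ℓ j ≤ a * ((c (j - 1) : ℝ) * (a / d) ^ (j - 1)) :=
          (hℓu j hj1).trans (mul_le_mul_of_nonneg_left h3 ha)
        have h5 : u (m + 2 - j) * ℓ j ≤
            ((c (m + 2 - j) : ℝ) * (a / d) ^ (m + 2 - j)) *
              (a * ((c (j - 1) : ℝ) * (a / d) ^ (j - 1))) :=
          mul_le_mul h4 h2 (hℓ j) (by positivity)
        refine h5.trans_eq ?_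
        have hpow : (a / d) ^ (m + 2 - j) * (a / d) ^ (j - 1) = (a / d) ^ (m + 1) := by
          rw [← pow_add]
          congr 1
          omega
        rw [← hpow]; ring
      have hreindex : (∑ j ∈ Finset.Icc 1 (m + 2),
              ((c (m + 2 - j) : ℝ) * (c (j - 1) : ℝ)) * (a * (a / d) ^ (m + 1)))
          = (∑ i ∈ Finset.range (m + 2), ((c i : ℝ) * (c (m + 1 - i) : ℝ)))
              * (a * (a / d) ^ (m + 1)) := by
        rw [← Finset.sum_mul]
        congr 1
        rw [← Finset.Ico_add_one_right_eq_Icc, Finset.sum_Ico_eq_sum_range]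
        apply Finset.sum_congr (by norm_num)
        intro i hi
        have hi' := Finset.mem_range.mp hi
        have e1 : m + 2 - (1 + i) = m + 1 - i := by omega
        have e2 : 1 + i - 1 = i := by omega
        rw [e1, e2, mul_comm]
      have hlast : a * u (m + 1) ≤ a * ((c (m + 1) : ℝ) * (a / d) ^ (m + 1)) :=
        mul_le_mul_of_nonneg_left (ih (m + 1) (by omega)) ha
      have hfinal : u (m + 2) ≤ (1 / d) *
          ((∑ i ∈ Finset.range (m + 2), ((c i : ℝ) * (c (m + 1 - i) : ℝ)))
              * (a * (a / d) ^ (m + 1))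
            + a * ((c (m + 1) : ℝ) * (a / d) ^ (m + 1))) := by
        refine h1.trans ?_
        apply mul_le_mul_of_nonneg_left _ (by positivity)
        rw [← hreindex]
        exact add_le_add hsum hlast
      refine hfinal.trans_eq ?_
      rw [c_rec]
      push_cast
      have hd' : d ≠ 0 := hd.ne'
      ring
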